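/- arXiv:1511.03751 — 3 statements merged into one kernel-verified Lean document; each statement's English description precedes it below -/
import Mathlib

section
/- For 1 < α < 2, λ ≥ 0, h > 0, with g_k = Γ(k-α)/(Γ(-α)Γ(k+1)) the Grünwald coefficients and μ_{-1} = (4 - 7α + 3α²)/24, μ_0 = (8 + α - 3α²)/12, μ_1 = (4 + 5α + 3α²)/24, define w_0 = μ_1 g_0 e^{λh}, w_1 = μ_1 g_1 + μ_0 g_0, and w_k = (μ_1 g_k + μ_0 g_{k-1} + μ_{-1} g_{k-2}) e^{(1-k)λh} for k ≥ 2. Then w_0 > 0 and w_1 ≤ 0. -/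
theorem stmt1 (α lam h : ℝ) (hα : 1 < α) (hα2 : α < 2) (hlam : 0 ≤ lam) (hh : 0 < h)
    (g : ℕ → ℝ) (hg : ∀ k, g k = Real.Gamma ((k : ℝ) - α) / (Real.Gamma (-α) * Real.Gamma ((k : ℝ) + 1)))
    (μm1 μ0 μ1 : ℝ)
    (hm1 : μm1 = (4 - 7*α + 3*α^2)/24)
    (h0 : μ0 = (8 + α - 3*α^2)/12)
    (h1 : μ1 = (4 + 5*α + 3*α^2)/24)
    (w : ℕ → ℝ)
    (hw0 : w 0 = μ1 * g 0 * Real.exp (lam * h))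
    (hw1 : w 1 = μ1 * g 1 + μ0 * g 0)
    (hwk : ∀ k, 2 ≤ k → w k = (μ1 * g k + μ0 * g (k-1) + μm1 * g (k-2)) * Real.exp ((1 - (k : ℝ)) * lam * h)) :
    0 < w 0 ∧ w 1 ≤ 0 := by
  have hne : Real.Gamma (-α) ≠ 0 := by
    apply Real.Gamma_ne_zero
    intro m
    rcases m with _ | _ | m
    · intro hc; push_cast at hc; linarith
    · intro hc; push_cast at hc; linarith
    · intro hc
      push_cast at hc
      have : (0:ℝ) ≤ (m : ℝ) := Nat.cast_nonneg m
      linarith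
  have hg0 : g 0 = 1 := by
    rw [hg 0]
    norm_num [Real.Gamma_one]
    exact hne
  have hg1 : g 1 = -α := by
    rw [hg 1]
    have h1e : (↑(1:ℕ) : ℝ) - α = -α + 1 := by push_cast; ring
    rw [h1e, Real.Gamma_add_one (by intro hc; simp at hc; linarith)]
    have h2e : (↑(1:ℕ) : ℝ) + 1 = 2 := by norm_num
    rw [h2e, Real.Gamma_two]
    field_simp
  constructor
  · rw [hw0, hg0]
    have : 0 < μ1 := by rw [h1]; nlinarith
    positivity
  · rw [hw1, hg0, hg1, h0, h1]
    nlinarith [sq_nonneg α, sq_nonneg (α - 1), mul_nonneg (sub_nonneg.2 hα.le) (sq_nonneg α)]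
end

section
/- For 1 < α < 2 and k ≥ 4, the weight w_k^{(α,λ)} = (μ_1 g_k^{(α)} + μ_0 g_{k-1}^{(α)} + μ_{-1} g_{k-2}^{(α)}) e^{(1-k)λh} is nonnegative, where λ ≥ 0, h > 0. -/
set_option maxHeartbeats 1000000


theorem stmt3 (α lam h : ℝ) (hα : 1 < α) (hα2 : α < 2) (hlam : 0 ≤ lam) (hh : 0 < h)
    (g : ℕ → ℝ) (hg : ∀ k, g k = Real.Gamma ((k : ℝ) - α) / (Real.Gamma (-α) * Real.Gamma ((k : ℝ) + 1)))
    (μm1 μ0 μ1 : ℝ)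
    (hm1 : μm1 = (4 - 7*α + 3*α^2)/24)
    (h0 : μ0 = (8 + α - 3*α^2)/12)
    (h1 : μ1 = (4 + 5*α + 3*α^2)/24)
    (k : ℕ) (hk : 4 ≤ k) :
    0 ≤ (μ1 * g k + μ0 * g (k-1) + μm1 * g (k-2)) * Real.exp ((1 - (k : ℝ)) * lam * h) := by
  set n : ℝ := (k : ℝ) with hn
  have hn4 : (4 : ℝ) ≤ n := by rw [hn]; exact_mod_cast hk
  have hc1 : ((k - 1 : ℕ) : ℝ) = n - 1 := by
    rw [Nat.cast_sub (by omega)]; norm_num; exact hn.symm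
  have hc2 : ((k - 2 : ℕ) : ℝ) = n - 2 := by
    rw [Nat.cast_sub (by omega)]; norm_num; exact hn.symm
  have hC : 0 < Real.Gamma (-α) := by
    have h1g : Real.Gamma (-α + 1) = -α * Real.Gamma (-α) :=
      Real.Gamma_add_one (by linarith)
    have h2g : Real.Gamma (-α + 1 + 1) = (-α + 1) * Real.Gamma (-α + 1) :=
      Real.Gamma_add_one (by linarith)
    have hpos : 0 < Real.Gamma (-α + 1 + 1) := Real.Gamma_pos_of_pos (by linarith)
    rw [h2g, h1g] at hpos
    have h3 : 0 < (α^2 - α) * Real.Gamma (-α) := by nlinarith [hpos]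
    have h4 : 0 < α^2 - α := by nlinarith
    by_contra hneg
    push_neg at hneg
    nlinarith [mul_nonpos_of_nonneg_of_nonpos h4.le hneg]
  have hG : 0 < Real.Gamma (n - 2 - α) := Real.Gamma_pos_of_pos (by linarith)
  have hH : 0 < Real.Gamma (n - 1) := Real.Gamma_pos_of_pos (by linarith)
  have e2 : Real.Gamma (n - 1 - α) = (n - 2 - α) * Real.Gamma (n - 2 - α) := by
    have := Real.Gamma_add_one (show n - 2 - α ≠ 0 by nlinarith)
    rw [show n - 2 - α + 1 = n - 1 - α by ring] at this
    exact this
  have e1 : Real.Gamma (n - α) = (n - 1 - α) * ((n - 2 - α) * Real.Gamma (n - 2 - α)) := by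
    have := Real.Gamma_add_one (show n - 1 - α ≠ 0 by nlinarith)
    rw [show n - 1 - α + 1 = n - α by ring, e2] at this
    exact this
  have e4 : Real.Gamma n = (n - 1) * Real.Gamma (n - 1) := by
    have := Real.Gamma_add_one (show n - 1 ≠ 0 by nlinarith)
    rw [show n - 1 + 1 = n by ring] at this
    exact this
  have e3 : Real.Gamma (n + 1) = n * ((n - 1) * Real.Gamma (n - 1)) := by
    have := Real.Gamma_add_one (show n ≠ 0 by nlinarith)
    rw [e4] at this
    exact this
  have hgk := hg k
  have hgk1 := hg (k - 1)
  have hgk2 := hg (k - 2)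
  rw [hc1, show n - 1 + 1 = n by ring] at hgk1
  rw [hc2, show n - 2 + 1 = n - 1 by ring] at hgk2
  rw [← hn] at hgk
  have hF : 0 ≤ μ1 * (n - 1 - α) * (n - 2 - α) + μ0 * (n * (n - 2 - α)) + μm1 * (n * (n - 1)) := by
    subst hm1 h0 h1
    nlinarith [mul_nonneg (by linarith : (0:ℝ) ≤ n - 4) (by linarith : (0:ℝ) ≤ α - 1),
      mul_nonneg (by linarith : (0:ℝ) ≤ n - 4) (by linarith : (0:ℝ) ≤ 2 - α),
      mul_nonneg (by linarith : (0:ℝ) ≤ α - 1) (by linarith : (0:ℝ) ≤ 2 - α),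
      sq_nonneg (n - 4), sq_nonneg (α - 1), sq_nonneg (2 - α), sq_nonneg ((α-1)*(2-α)),
      mul_nonneg (mul_nonneg (by linarith : (0:ℝ) ≤ α - 1) (by linarith : (0:ℝ) ≤ α - 1)) (by linarith : (0:ℝ) ≤ 2 - α),
      mul_nonneg (mul_nonneg (by linarith : (0:ℝ) ≤ 2 - α) (by linarith : (0:ℝ) ≤ 2 - α)) (by linarith : (0:ℝ) ≤ α - 1),
      sq_nonneg ((n-4)*(α-1)), sq_nonneg ((n-4)*(2-α))]
  have key : μ1 * g k + μ0 * g (k - 1) + μm1 * g (k - 2) =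
      (μ1 * (n - 1 - α) * (n - 2 - α) + μ0 * (n * (n - 2 - α)) + μm1 * (n * (n - 1))) *
        Real.Gamma (n - 2 - α) / (Real.Gamma (-α) * (n * ((n - 1) * Real.Gamma (n - 1)))) := by
    rw [hgk, hgk1, hgk2, e1, e2, e3, e4]
    have hn0 : n ≠ 0 := by linarith
    have hn1 : n - 1 ≠ 0 := by intro hz; nlinarith
    field_simp
  apply mul_nonneg _ (Real.exp_pos _).le
  rw [key]
  apply div_nonneg (mul_nonneg hF hG.le)
  have : (0:ℝ) < n - 1 := by linarith
  positivity
end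

section
/- For 1 < α < 2, λ > 0, h > 0, the series Σ_{k=0}^∞ w_k^{(α,λ)} converges and equals (μ_1 e^{λh} + μ_0 + μ_{-1} e^{-λh})(1 - e^{-λh})^α, where w_0 = μ_1 g_0 e^{λh}, w_1 = μ_1 g_1 + μ_0 g_0, w_k = (μ_1 g_k + μ_0 g_{k-1} + μ_{-1} g_{k-2}) e^{(1-k)λh} for k ≥ 2. -/
open Finset in
lemma stmt4_cast_ne (α : ℝ) (hα : 1 < α) (hα2 : α < 2) (n : ℕ) : (n : ℝ) ≠ α := by
  rcases le_or_gt n 1 with hn | hn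
  · have : (n : ℝ) ≤ 1 := by exact_mod_cast hn
    linarith
  · have : (2 : ℝ) ≤ (n : ℝ) := by exact_mod_cast hn
    linarith

lemma stmt4_gamma_prod (α : ℝ) (hα : 1 < α) (hα2 : α < 2) (n : ℕ) :
    Real.Gamma ((n : ℝ) - α) = (∏ j ∈ Finset.range n, ((j : ℝ) - α)) * Real.Gamma (-α) := by
  induction n with
  | zero => simp
  | succ n ih =>
    have hne : (n : ℝ) - α ≠ 0 := sub_ne_zero_of_ne (stmt4_cast_ne α hα hα2 n)
    have hcast : ((n + 1 : ℕ) : ℝ) - α = ((n : ℝ) - α) + 1 := by push_cast; ring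
    rw [hcast, Real.Gamma_add_one hne, ih, Finset.prod_range_succ]
    ring

lemma stmt4_iteratedDeriv (α : ℝ) (n : ℕ) :
    ∀ z ∈ Metric.ball (0 : ℂ) 1,
      iteratedDeriv n (fun z : ℂ => (1 - z) ^ (α : ℂ)) z
        = (∏ j ∈ Finset.range n, ((j : ℂ) - α)) * (1 - z) ^ ((α : ℂ) - n) := by
  induction n with
  | zero => intro z hz; simp
  | succ n ih =>
    intro z hz
    have hslit : (1 : ℂ) - z ∈ Complex.slitPlane := by
      rw [Complex.mem_slitPlane_iff]
      left
      have h1 : |z.re| ≤ ‖z‖ := Complex.abs_re_le_norm z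
      have h2 : ‖z‖ < 1 := by simpa using mem_ball_zero_iff.mp hz
      have : z.re < 1 := lt_of_le_of_lt (le_trans (le_abs_self _) h1) h2
      simp [Complex.sub_re, Complex.one_re]
      linarith
    rw [iteratedDeriv_succ]
    have heq : iteratedDeriv n (fun z : ℂ => (1 - z) ^ (α : ℂ))
        =ᶠ[nhds z] fun w => (∏ j ∈ Finset.range n, ((j : ℂ) - α)) * (1 - w) ^ ((α : ℂ) - n) :=
      Filter.eventuallyEq_of_mem (Metric.isOpen_ball.mem_nhds hz) (fun w hw => ih w hw)
    rw [heq.deriv_eq]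
    have hd : HasDerivAt (fun w : ℂ => (1 - w) ^ ((α : ℂ) - n))
        (((α : ℂ) - n) * (1 - z) ^ ((α : ℂ) - n - 1) * (-1)) z :=
      HasDerivAt.cpow_const ((hasDerivAt_id z).const_sub 1) hslit
    rw [deriv_const_mul _ hd.differentiableAt, hd.deriv, Finset.prod_range_succ]
    have hc : (α : ℂ) - (n + 1 : ℕ) = (α : ℂ) - n - 1 := by push_cast; ring
    rw [hc]
    ring

lemma stmt4_binomial (α : ℝ) (hα : 1 < α) (hα2 : α < 2) (x : ℝ) (hx0 : 0 ≤ x) (hx1 : x < 1) :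
    HasSum (fun k : ℕ =>
        Real.Gamma ((k : ℝ) - α) / (Real.Gamma (-α) * Real.Gamma ((k : ℝ) + 1)) * x ^ k)
      ((1 - x) ^ α) := by
  have hΓne : Real.Gamma (-α) ≠ 0 := by
    apply Real.Gamma_ne_zero
    intro m hm
    have : (m : ℝ) = α := by linarith [neg_injective hm]
    exact stmt4_cast_ne α hα hα2 m this
  have hdiff : DifferentiableOn ℂ (fun z : ℂ => (1 - z) ^ (α : ℂ)) (Metric.ball 0 1) := by
    intro z hz
    have hslit : (1 : ℂ) - z ∈ Complex.slitPlane := by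
      rw [Complex.mem_slitPlane_iff]
      left
      have h1 : |z.re| ≤ ‖z‖ := Complex.abs_re_le_norm z
      have h2 : ‖z‖ < 1 := by simpa using mem_ball_zero_iff.mp hz
      have : z.re < 1 := lt_of_le_of_lt (le_trans (le_abs_self _) h1) h2
      simp [Complex.sub_re, Complex.one_re]
      linarith
    exact (HasDerivAt.cpow_const ((hasDerivAt_id z).const_sub 1) hslit).differentiableAt.differentiableWithinAt
  have hxball : (x : ℂ) ∈ Metric.ball (0 : ℂ) 1 := by
    rw [mem_ball_zero_iff]
    simpa [Complex.norm_real, Real.norm_eq_abs, abs_of_nonneg hx0] using hx1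
  have H := Complex.hasSum_taylorSeries_on_ball hdiff hxball
  have hfx : (1 - (x : ℂ)) ^ (α : ℂ) = (((1 - x : ℝ) ^ α : ℝ) : ℂ) := by
    rw [Complex.ofReal_cpow (by linarith), Complex.ofReal_sub, Complex.ofReal_one]
  have hterm : ∀ n : ℕ,
      ((n.factorial : ℂ)⁻¹ • ((x : ℂ) - 0) ^ n • iteratedDeriv n (fun z : ℂ => (1 - z) ^ (α : ℂ)) 0)
        = ((Real.Gamma ((n : ℝ) - α) / (Real.Gamma (-α) * Real.Gamma ((n : ℝ) + 1)) * x ^ n : ℝ) : ℂ) := by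
    intro n
    have h0 := stmt4_iteratedDeriv α n 0 (by simp)
    rw [sub_zero, Complex.one_cpow] at h0
    have hreal : Real.Gamma ((n : ℝ) - α) / (Real.Gamma (-α) * Real.Gamma ((n : ℝ) + 1))
        = (∏ j ∈ Finset.range n, ((j : ℝ) - α)) / n.factorial := by
      rw [stmt4_gamma_prod α hα hα2 n, Real.Gamma_nat_eq_factorial]
      field_simp
    rw [h0, hreal, mul_one, smul_eq_mul, smul_eq_mul]
    push_cast
    ring
  rw [funext hterm, hfx] at H
  exact (Complex.hasSum_ofReal).mp H

lemma stmt4_shift {f : ℕ → ℝ} {S : ℝ} (d : ℕ) (h : HasSum f S) :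
    HasSum (fun n => if d ≤ n then f (n - d) else 0) S := by
  have hinj : Function.Injective (fun n : ℕ => n + d) := fun a b hab => by simpa using hab
  have hvan : ∀ n ∉ Set.range (fun n : ℕ => n + d),
      (if d ≤ n then f (n - d) else 0) = 0 := by
    intro n hn
    rw [if_neg]
    intro hle
    exact hn ⟨n - d, by simp; omega⟩
  refine (Function.Injective.hasSum_iff hinj hvan).mp ?_
  have hco : ((fun n => if d ≤ n then f (n - d) else 0) ∘ fun n : ℕ => n + d) = f := by
    funext n; simp
  rw [hco]
  exact h

theorem stmt4 (α lam h : ℝ) (hα : 1 < α) (hα2 : α < 2) (hlam : 0 < lam) (hh : 0 < h)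
    (g : ℕ → ℝ) (hg : ∀ k, g k = Real.Gamma ((k : ℝ) - α) / (Real.Gamma (-α) * Real.Gamma ((k : ℝ) + 1)))
    (μm1 μ0 μ1 : ℝ)
    (hm1 : μm1 = (4 - 7*α + 3*α^2)/24)
    (h0 : μ0 = (8 + α - 3*α^2)/12)
    (h1 : μ1 = (4 + 5*α + 3*α^2)/24)
    (w : ℕ → ℝ)
    (hw0 : w 0 = μ1 * g 0 * Real.exp (lam * h))
    (hw1 : w 1 = μ1 * g 1 + μ0 * g 0)
    (hwk : ∀ k, 2 ≤ k → w k = (μ1 * g k + μ0 * g (k-1) + μm1 * g (k-2)) * Real.exp ((1 - (k : ℝ)) * lam * h)) :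
    HasSum w ((μ1 * Real.exp (lam * h) + μ0 + μm1 * Real.exp (-(lam * h)))
      * (1 - Real.exp (-(lam * h))) ^ α) := by
  set x : ℝ := Real.exp (-(lam * h)) with hxdef
  set E : ℝ := Real.exp (lam * h) with hEdef
  have hx0 : 0 < x := Real.exp_pos _
  have hx1 : x < 1 := by
    rw [hxdef]
    exact Real.exp_lt_one_iff.mpr (by nlinarith)
  have hEx : E * x = 1 := by
    rw [hEdef, hxdef, ← Real.exp_add]
    simp
  have hgsum : HasSum (fun k : ℕ => g k * x ^ k) ((1 - x) ^ α) := by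
    have hb := stmt4_binomial α hα hα2 x hx0.le hx1
    have hfun : (fun k : ℕ => g k * x ^ k)
        = fun k : ℕ => Real.Gamma ((k : ℝ) - α) / (Real.Gamma (-α) * Real.Gamma ((k : ℝ) + 1)) * x ^ k := by
      funext k; rw [hg k]
    rw [hfun]
    exact hb
  have ha := hgsum.mul_left (μ1 * E)
  have hb' := stmt4_shift 1 (hgsum.mul_left μ0)
  have hc' := stmt4_shift 2 (hgsum.mul_left (μm1 * x))
  have total := (ha.add hb').add hc'
  have hW : w = fun n : ℕ =>
      ((μ1 * E) * (g n * x ^ n) + (if 1 ≤ n then μ0 * (g (n - 1) * x ^ (n - 1)) else 0))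
        + (if 2 ≤ n then (μm1 * x) * (g (n - 2) * x ^ (n - 2)) else 0) := by
    funext n
    rcases n with _ | _ | n
    · simp only [hw0]
      norm_num
      ring
    · simp only [hw1]
      norm_num
      linear_combination (-(μ1 * g 1)) * hEx
    · rw [hwk (n + 2) (by omega)]
      have hexp : Real.exp ((1 - ((n + 2 : ℕ) : ℝ)) * lam * h) = x ^ (n + 1) := by
        rw [hxdef, ← Real.exp_nat_mul]
        congr 1
        push_cast
        ring
      have h1n : n + 2 - 1 = n + 1 := by omega
      have h2n : n + 2 - 2 = n := by omega
      rw [hexp, h1n, h2n, if_pos (by omega : 1 ≤ n + 2), if_pos (by omega : 2 ≤ n + 2)]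
      linear_combination (-(μ1 * g (n + 2) * x ^ (n + 1))) * hEx
  rw [hW]
  convert total using 1
  · rfl
  ring
end
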